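/- Nonlinear integral inequality lemma (Lemma 13.5): let C > 0, ε > 0, 0 < γ ≤ 1 satisfy 0 < 16(C² + C)ε < γ, and let n₀₀, n₀₁ : [0,∞) → [0,∞) be continuous functions satisfying, for all t ≥ 0, n₀₀(t) ≤ Cε ( ∫₀^t (1+s)^{−1−γ} n₀₁(s) ds + 1 ) and n₀₁(t) ≤ Cε ( ∫₀^t (1+s)^{−1−γ} n₀₁(s) ds + 1 ) + C ∫₀^t (1+s)^{−1} n₀₀(s)² ds. Then for all t ≥ 0, n₀₀(t) ≤ 2Cε and n₀₁(t) ≤ 2Cε (1 + γ ln(1+t)). -/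

import Mathlib

open scoped BigOperators

noncomputable section

open Real

lemma aux_ftc1 (γ : ℝ) (hγ : 0 < γ) (T : ℝ) (hT : 0 ≤ T) :
    ∫ s in (0:ℝ)..T, (1+s) ^ (-(1:ℝ)-γ) * (1 + γ * Real.log (1+s)) =
      2/γ - (1+T) ^ (-γ) * (2/γ + Real.log (1+T)) := by
  have key : ∀ s ∈ Set.uIcc (0:ℝ) T,
      HasDerivAt (fun s => -((1+s) ^ (-γ) * (2/γ + Real.log (1+s))))
        ((1+s) ^ (-(1:ℝ)-γ) * (1 + γ * Real.log (1+s))) s := by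
    intro s hs
    rw [Set.uIcc_of_le hT] at hs
    have hpos : (0:ℝ) < 1 + s := by linarith [hs.1]
    have h1 : HasDerivAt (fun s : ℝ => 1 + s) 1 s := (hasDerivAt_id s).const_add 1
    have h2 : HasDerivAt (fun s : ℝ => (1+s) ^ (-γ))
        ((-γ) * (1+s) ^ (-γ-1) * 1) s :=
      (Real.hasDerivAt_rpow_const (Or.inl hpos.ne')).comp s h1
    have h3 : HasDerivAt (fun s : ℝ => Real.log (1+s)) ((1+s)⁻¹ * 1) s :=
      (Real.hasDerivAt_log hpos.ne').comp s h1
    have h4 := (h2.mul ((h3.const_add (2/γ)))).neg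
    refine h4.congr_deriv ?_
    have hr : (1+s) ^ (-γ-1) = (1+s) ^ (-γ) * (1+s)⁻¹ := by
      rw [Real.rpow_sub_one hpos.ne']; ring
    have he : (-(1:ℝ)-γ) = -γ-1 := by ring
    rw [he, hr]
    field_simp
    ring
  have hint : IntervalIntegrable
      (fun s => (1+s) ^ (-(1:ℝ)-γ) * (1 + γ * Real.log (1+s))) MeasureTheory.volume 0 T := by
    apply ContinuousOn.intervalIntegrable
    rw [Set.uIcc_of_le hT]
    intro s hs
    have hpos : (0:ℝ) < 1 + s := by linarith [hs.1]
    apply ContinuousWithinAt.mul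
    · exact (Real.continuousAt_rpow_const _ _ (Or.inl hpos.ne')).comp
        (by continuity : Continuous fun s : ℝ => 1 + s).continuousAt |>.continuousWithinAt
    · exact (continuousAt_const.add (continuousAt_const.mul
        ((Real.continuousAt_log hpos.ne').comp (by continuity : Continuous fun s : ℝ => 1 + s).continuousAt))).continuousWithinAt
  rw [intervalIntegral.integral_eq_sub_of_hasDerivAt key hint]
  simp [Real.log_one, Real.one_rpow]
  ring

lemma aux_ftc2 (T : ℝ) (hT : 0 ≤ T) :
    ∫ s in (0:ℝ)..T, (1+s)⁻¹ = Real.log (1+T) := by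
  have key : ∀ s ∈ Set.uIcc (0:ℝ) T,
      HasDerivAt (fun s => Real.log (1+s)) ((1+s)⁻¹) s := by
    intro s hs
    rw [Set.uIcc_of_le hT] at hs
    have hpos : (0:ℝ) < 1 + s := by linarith [hs.1]
    have h1 : HasDerivAt (fun s : ℝ => 1 + s) 1 s := (hasDerivAt_id s).const_add 1
    have h3 : HasDerivAt (fun s : ℝ => Real.log (1+s)) ((1+s)⁻¹ * 1) s :=
      (Real.hasDerivAt_log hpos.ne').comp s h1
    simpa using h3
  have hint : IntervalIntegrable (fun s : ℝ => (1+s)⁻¹) MeasureTheory.volume 0 T := by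
    apply ContinuousOn.intervalIntegrable
    rw [Set.uIcc_of_le hT]
    intro s hs
    have hpos : (0:ℝ) < 1 + s := by linarith [hs.1]
    exact ((continuousAt_const.add continuousAt_id).inv₀ hpos.ne').continuousWithinAt
  rw [intervalIntegral.integral_eq_sub_of_hasDerivAt key hint]
  simp

lemma aux_rcont (γ T : ℝ) (hT : 0 ≤ T) :
    ContinuousOn (fun s : ℝ => (1+s) ^ (-(1:ℝ)-γ)) (Set.Icc 0 T) := by
  intro s hs
  have hpos : (0:ℝ) < 1 + s := by linarith [hs.1]
  exact ((Real.continuousAt_rpow_const _ _ (Or.inl hpos.ne')).comp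
    (by continuity : Continuous fun s : ℝ => 1 + s).continuousAt).continuousWithinAt

lemma aux_lcont (T : ℝ) : ContinuousOn (fun s : ℝ => Real.log (1+s)) (Set.Icc 0 T) := by
  intro s hs
  have hpos : (0:ℝ) < 1 + s := by linarith [hs.1]
  exact ((Real.continuousAt_log hpos.ne').comp
    (by continuity : Continuous fun s : ℝ => 1 + s).continuousAt).continuousWithinAt

lemma improve (C ε γ : ℝ) (hC : 0 < C) (hε : 0 < ε) (hγ₀ : 0 < γ) (hγ₁ : γ ≤ 1)
    (hsmall : 16 * (C ^ 2 + C) * ε < γ)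
    (n₀₀ n₀₁ : ℝ → ℝ)
    (hcont₀ : ContinuousOn n₀₀ (Set.Ici 0)) (hcont₁ : ContinuousOn n₀₁ (Set.Ici 0))
    (hnn₀ : ∀ t, 0 ≤ t → 0 ≤ n₀₀ t) (hnn₁ : ∀ t, 0 ≤ t → 0 ≤ n₀₁ t)
    (h₀ : ∀ t, 0 ≤ t →
      n₀₀ t ≤ C * ε * ((∫ s in (0:ℝ)..t, (1 + s) ^ (-(1:ℝ) - γ) * n₀₁ s) + 1))
    (h₁ : ∀ t, 0 ≤ t →
      n₀₁ t ≤ C * ε * ((∫ s in (0:ℝ)..t, (1 + s) ^ (-(1:ℝ) - γ) * n₀₁ s) + 1)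
        + C * ∫ s in (0:ℝ)..t, (1 + s)⁻¹ * (n₀₀ s) ^ 2)
    (T : ℝ) (hT : 0 ≤ T)
    (hb : ∀ s, 0 ≤ s → s ≤ T →
      n₀₀ s ≤ 2*C*ε ∧ n₀₁ s ≤ 2*C*ε*(1 + γ*Real.log (1+s))) :
    n₀₀ T < 2*C*ε ∧ n₀₁ T < 2*C*ε*(1 + γ*Real.log (1+T)) := by
  set IV := ∫ s in (0:ℝ)..T, (1 + s) ^ (-(1:ℝ) - γ) * n₀₁ s with hIVdef
  set JV := ∫ s in (0:ℝ)..T, (1 + s)⁻¹ * (n₀₀ s) ^ 2 with hJVdef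
  have h16a : 16 * C * ε < γ := by nlinarith [mul_nonneg (sq_nonneg C) hε.le]
  have h16b : 16 * C ^ 2 * ε < γ := by nlinarith [mul_pos hC hε]
  -- integrability facts
  have hrcont := aux_rcont γ T hT
  have hint₁ : IntervalIntegrable (fun s => (1 + s) ^ (-(1:ℝ) - γ) * n₀₁ s)
      MeasureTheory.volume 0 T := by
    apply ContinuousOn.intervalIntegrable
    rw [Set.uIcc_of_le hT]
    exact hrcont.mul (hcont₁.mono (Set.Icc_subset_Ici_self))
  have hint₂ : IntervalIntegrable
      (fun s => (1 + s) ^ (-(1:ℝ) - γ) * (2*C*ε*(1 + γ*Real.log (1+s))))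
      MeasureTheory.volume 0 T := by
    apply ContinuousOn.intervalIntegrable
    rw [Set.uIcc_of_le hT]
    exact hrcont.mul (continuousOn_const.mul
      (continuousOn_const.add (continuousOn_const.mul (aux_lcont T))))
  -- bound on IV
  have hImono : IV ≤ ∫ s in (0:ℝ)..T,
      (1 + s) ^ (-(1:ℝ) - γ) * (2*C*ε*(1 + γ*Real.log (1+s))) := by
    apply intervalIntegral.integral_mono_on hT hint₁ hint₂
    intro s hs
    have hpos : (0:ℝ) < 1 + s := by linarith [hs.1]
    exact mul_le_mul_of_nonneg_left ((hb s hs.1 hs.2).2)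
      (Real.rpow_nonneg hpos.le _)
  have hIpull : (∫ s in (0:ℝ)..T,
        (1 + s) ^ (-(1:ℝ) - γ) * (2*C*ε*(1 + γ*Real.log (1+s))))
      = 2*C*ε * ∫ s in (0:ℝ)..T, (1 + s) ^ (-(1:ℝ) - γ) * (1 + γ*Real.log (1+s)) := by
    rw [← intervalIntegral.integral_const_mul]
    congr 1; funext s; ring
  have hIval : (∫ s in (0:ℝ)..T, (1 + s) ^ (-(1:ℝ) - γ) * (1 + γ*Real.log (1+s))) ≤ 2/γ := by
    rw [aux_ftc1 γ hγ₀ T hT]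
    have h1 : (0:ℝ) < (1+T) ^ (-γ) := Real.rpow_pos_of_pos (by linarith) _
    have h2 : (0:ℝ) ≤ Real.log (1+T) := Real.log_nonneg (by linarith)
    nlinarith [mul_nonneg h1.le (by positivity : (0:ℝ) ≤ 2/γ)]
  have hI : γ * IV ≤ 4 * C * ε := by
    have hIle : IV ≤ 2*C*ε * (2/γ) := by
      refine hImono.trans ?_
      rw [hIpull]
      exact mul_le_mul_of_nonneg_left hIval (by positivity)
    calc γ * IV ≤ γ * (2*C*ε * (2/γ)) := mul_le_mul_of_nonneg_left hIle hγ₀.le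
      _ = 4 * C * ε := by field_simp; ring
  have hI0 : 0 ≤ IV := by
    apply intervalIntegral.integral_nonneg hT
    intro s hs
    have hpos : (0:ℝ) < 1 + s := by linarith [hs.1]
    exact mul_nonneg (Real.rpow_nonneg hpos.le _) (hnn₁ s hs.1)
  -- bound on JV
  have hJ : JV ≤ 4*C^2*ε^2 * Real.log (1+T) := by
    have hmono : JV ≤ ∫ s in (0:ℝ)..T, (1 + s)⁻¹ * (2*C*ε)^2 := by
      apply intervalIntegral.integral_mono_on hT
      · apply ContinuousOn.intervalIntegrable
        rw [Set.uIcc_of_le hT]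
        refine ContinuousOn.mul ?_ ((hcont₀.mono Set.Icc_subset_Ici_self).pow 2)
        intro s hs
        have hpos : (0:ℝ) < 1 + s := by linarith [hs.1]
        exact ((continuousAt_const.add continuousAt_id).inv₀ hpos.ne').continuousWithinAt
      · apply ContinuousOn.intervalIntegrable
        rw [Set.uIcc_of_le hT]
        refine ContinuousOn.mul ?_ continuousOn_const
        intro s hs
        have hpos : (0:ℝ) < 1 + s := by linarith [hs.1]
        exact ((continuousAt_const.add continuousAt_id).inv₀ hpos.ne').continuousWithinAt
      · intro s hs
        have hpos : (0:ℝ) < 1 + s := by linarith [hs.1]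
        refine mul_le_mul_of_nonneg_left ?_ (by positivity)
        exact pow_le_pow_left₀ (hnn₀ s hs.1) (hb s hs.1 hs.2).1 2
    calc JV ≤ ∫ s in (0:ℝ)..T, (1 + s)⁻¹ * (2*C*ε)^2 := hmono
      _ = (2*C*ε)^2 * ∫ s in (0:ℝ)..T, (1 + s)⁻¹ := by
          rw [← intervalIntegral.integral_const_mul]; congr 1; funext s; ring
      _ = 4*C^2*ε^2 * Real.log (1+T) := by rw [aux_ftc2 T hT]; ring
  have hJ0 : 0 ≤ JV := by
    apply intervalIntegral.integral_nonneg hT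
    intro s hs
    have hpos : (0:ℝ) < 1 + s := by linarith [hs.1]
    positivity
  have hL : 0 ≤ Real.log (1+T) := Real.log_nonneg (by linarith)
  -- conclude
  have hIV14 : IV < 1/4 := by nlinarith
  have goal1 : C * ε * (IV + 1) < 2 * C * ε := by nlinarith [mul_pos hC hε]
  constructor
  · exact lt_of_le_of_lt (h₀ T hT) goal1
  · have hco : C * (4*C^2*ε^2) ≤ 2*C*ε*γ := by nlinarith [mul_pos (mul_pos hC hC) (mul_pos hC hε), mul_pos hC hε, mul_nonneg (mul_nonneg hC.le hC.le) (mul_nonneg hC.le hε.le)]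
    have h2 : C * JV ≤ 2*C*ε*γ * Real.log (1+T) := by
      calc C * JV ≤ C * (4*C^2*ε^2 * Real.log (1+T)) :=
            mul_le_mul_of_nonneg_left hJ hC.le
        _ = C * (4*C^2*ε^2) * Real.log (1+T) := by ring
        _ ≤ 2*C*ε*γ * Real.log (1+T) := mul_le_mul_of_nonneg_right hco hL
    have := h₁ T hT
    nlinarith [this]

/-- Lemma 13.5: a nonlinear integral inequality lemma. -/
theorem nonlinear_integral_inequality
    (C ε γ : ℝ) (hC : 0 < C) (hε : 0 < ε) (hγ₀ : 0 < γ) (hγ₁ : γ ≤ 1)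
    (hsmall : 16 * (C ^ 2 + C) * ε < γ)
    (n₀₀ n₀₁ : ℝ → ℝ)
    (hcont₀ : ContinuousOn n₀₀ (Set.Ici 0)) (hcont₁ : ContinuousOn n₀₁ (Set.Ici 0))
    (hnn₀ : ∀ t, 0 ≤ t → 0 ≤ n₀₀ t) (hnn₁ : ∀ t, 0 ≤ t → 0 ≤ n₀₁ t)
    (h₀ : ∀ t, 0 ≤ t →
      n₀₀ t ≤ C * ε * ((∫ s in (0:ℝ)..t, (1 + s) ^ (-(1:ℝ) - γ) * n₀₁ s) + 1))
    (h₁ : ∀ t, 0 ≤ t →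
      n₀₁ t ≤ C * ε * ((∫ s in (0:ℝ)..t, (1 + s) ^ (-(1:ℝ) - γ) * n₀₁ s) + 1)
        + C * ∫ s in (0:ℝ)..t, (1 + s)⁻¹ * (n₀₀ s) ^ 2) :
    ∀ t, 0 ≤ t →
      n₀₀ t ≤ 2 * C * ε ∧ n₀₁ t ≤ 2 * C * ε * (1 + γ * Real.log (1 + t)) := by
  set g : ℝ → ℝ := fun s => 2 * C * ε * (1 + γ * Real.log (1 + s)) with hg
  by_contra hcon
  have hne : ∃ t, 0 ≤ t ∧ ¬(n₀₀ t ≤ 2 * C * ε ∧ n₀₁ t ≤ g t) := by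
    by_contra h2
    push_neg at h2
    exact hcon fun t ht => h2 t ht
  set Bad : Set ℝ := {t | 0 ≤ t ∧ ¬(n₀₀ t ≤ 2 * C * ε ∧ n₀₁ t ≤ g t)} with hBad
  have hBne : Bad.Nonempty := by obtain ⟨t, ht⟩ := hne; exact ⟨t, ht⟩
  have hbdd : BddBelow Bad := ⟨0, fun b hb => hb.1⟩
  set T := sInf Bad with hTdef
  have hT0 : 0 ≤ T := le_csInf hBne fun b hb => hb.1
  have hbelow : ∀ s, 0 ≤ s → s < T → n₀₀ s ≤ 2 * C * ε ∧ n₀₁ s ≤ g s := by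
    intro s hs hsT
    by_contra hPs
    exact absurd (csInf_le hbdd ⟨hs, hPs⟩) (not_le.2 hsT)
  -- bounds hold (non-strictly) at T
  have hbT : n₀₀ T ≤ 2 * C * ε ∧ n₀₁ T ≤ g T := by
    rcases eq_or_lt_of_le hT0 with h | h
    · have h0 := h₀ 0 le_rfl
      have h1 := h₁ 0 le_rfl
      simp only [intervalIntegral.integral_same] at h0 h1
      constructor
      · rw [← h]; nlinarith [mul_pos hC hε]
      · rw [← h]
        have : g 0 = 2 * C * ε := by simp [hg]
        rw [this]
        nlinarith [mul_pos hC hε]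
    · have hnb : (nhdsWithin T (Set.Ico 0 T)).NeBot := by
        rw [← mem_closure_iff_nhdsWithin_neBot, closure_Ico h.ne]
        exact ⟨hT0, le_rfl⟩
      have ht0 : Filter.Tendsto n₀₀ (nhdsWithin T (Set.Ico 0 T)) (nhds (n₀₀ T)) :=
        (hcont₀ T hT0).mono Set.Ico_subset_Ici_self
      have ht1 : Filter.Tendsto n₀₁ (nhdsWithin T (Set.Ico 0 T)) (nhds (n₀₁ T)) :=
        (hcont₁ T hT0).mono Set.Ico_subset_Ici_self
      have hgc : ContinuousAt g T := by
        apply continuousAt_const.mul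
        apply continuousAt_const.add
        apply continuousAt_const.mul
        exact (Real.continuousAt_log (by linarith : (1:ℝ) + T ≠ 0)).comp
          (continuousAt_const.add continuousAt_id)
      have hgt : Filter.Tendsto g (nhdsWithin T (Set.Ico 0 T)) (nhds (g T)) :=
        hgc.continuousWithinAt
      constructor
      · exact le_of_tendsto ht0 (Filter.eventually_of_mem self_mem_nhdsWithin
          fun s hs => (hbelow s hs.1 hs.2).1)
      · exact le_of_tendsto_of_tendsto ht1 hgt (Filter.eventually_of_mem self_mem_nhdsWithin
          fun s hs => (hbelow s hs.1 hs.2).2)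
  have himp := improve C ε γ hC hε hγ₀ hγ₁ hsmall n₀₀ n₀₁ hcont₀ hcont₁ hnn₀ hnn₁ h₀ h₁ T hT0
    (fun s hs hsT => by
      rcases lt_or_eq_of_le hsT with h | h
      · exact hbelow s hs h
      · subst h; exact hbT)
  -- strict bounds in a neighborhood
  have ht0' : Filter.Tendsto n₀₀ (nhdsWithin T (Set.Ici 0)) (nhds (n₀₀ T)) := hcont₀ T hT0
  have ht1' : Filter.Tendsto n₀₁ (nhdsWithin T (Set.Ici 0)) (nhds (n₀₁ T)) := hcont₁ T hT0
  have hgc : ContinuousAt g T := by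
    apply continuousAt_const.mul
    apply continuousAt_const.add
    apply continuousAt_const.mul
    exact (Real.continuousAt_log (by linarith : (1:ℝ) + T ≠ 0)).comp
      (continuousAt_const.add continuousAt_id)
  have e1 : ∀ᶠ s in nhdsWithin T (Set.Ici 0), n₀₀ s < 2 * C * ε :=
    ht0'.eventually_lt_const himp.1
  have e2 : ∀ᶠ s in nhdsWithin T (Set.Ici 0), n₀₁ s < g s := by
    have hd : Filter.Tendsto (fun s => n₀₁ s - g s) (nhdsWithin T (Set.Ici 0))
        (nhds (n₀₁ T - g T)) := ht1'.sub hgc.continuousWithinAt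
    have hgT : g T = 2 * C * ε * (1 + γ * Real.log (1 + T)) := rfl
    have := hd.eventually_lt_const (by rw [hgT]; linarith [himp.2] : n₀₁ T - g T < 0)
    filter_upwards [this] with s hs
    linarith
  obtain ⟨δ, hδpos, hsub⟩ := Metric.mem_nhdsWithin_iff.1 (e1.and e2)
  have hTδ : T + δ ≤ T := by
    refine le_csInf hBne ?_
    intro b hb
    by_contra hlt
    push_neg at hlt
    obtain ⟨hb0, hbP⟩ := hb
    apply hbP
    rcases lt_trichotomy b T with hc | hc | hc
    · exact hbelow b hb0 hc
    · rw [hc]; exact hbT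
    · have hmem : b ∈ Metric.ball T δ ∩ Set.Ici 0 := by
        constructor
        · rw [Metric.mem_ball, Real.dist_eq, abs_lt]
          constructor <;> linarith
        · exact hb0
      have := hsub hmem
      exact ⟨this.1.le, this.2.le⟩
  linarith

end
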